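/- arXiv:1809.05224 — 5 statements merged into one kernel-verified Lean document; each statement's English description precedes it below -/
import Mathlib

section
/- Let W=(Y,X) be a random vector with E[Y^2]<∞, γ0(x)=E[Y|X=x], and α0(X) square-integrable. Suppose m(w,γ) is linear in γ and satisfies E[m(W,γ)] = E[α0(X)γ(X)] for all square-integrable γ, and let θ0 = E[m(W,γ0)]. Then for any square-integrable functions γ and α, defining ψ(W,θ0,γ,α) = m(W,γ) − θ0 + α(X)(Y − γ(X)), one has E[ψ(W,θ0,γ,α)] = −E[(α(X)−α0(X))(γ(X)−γ0(X))]. -/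
open MeasureTheory

lemma my_l2_mul_integrable {Ω : Type*} [MeasurableSpace Ω] {μ : Measure Ω}
    {f g : Ω → ℝ} (hf : MemLp f 2 μ) (hg : MemLp g 2 μ) :
    Integrable (fun ω => f ω * g ω) μ := by
  have h : MemLp (f • g) 1 μ :=
    hg.smul hf (hpqr := ⟨by simp [one_div, ENNReal.inv_two_add_inv_two]⟩)
  exact (memLp_one_iff_integrable.mp h).congr
    (Filter.Eventually.of_forall fun ω => by simp [smul_eq_mul])

/-- Debiasing identity: the debiased moment function
`ψ(w,θ₀,γ,α) = m(w,γ) − θ₀ + α(x)(y − γ(x))` satisfies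
`E[ψ(W,θ₀,γ,α)] = −E[(α(X)−α₀(X))(γ(X)−γ₀(X))]`. -/
theorem debiased_moment_identity
    {Ω 𝒳 : Type*} [MeasurableSpace Ω] [MeasurableSpace 𝒳]
    (μ : Measure Ω) [IsProbabilityMeasure μ]
    (Y : Ω → ℝ) (X : Ω → 𝒳)
    (m : Ω → (𝒳 → ℝ) → ℝ)
    (γ0 α0 γ α : 𝒳 → ℝ)
    (hY : MemLp Y 2 μ)
    (hγ0 : MemLp (fun ω => γ0 (X ω)) 2 μ)
    (hα0 : MemLp (fun ω => α0 (X ω)) 2 μ)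
    (hγ : MemLp (fun ω => γ (X ω)) 2 μ)
    (hα : MemLp (fun ω => α (X ω)) 2 μ)
    -- m(w,γ) is linear in γ:
    (hm_add : ∀ ω (g g' : 𝒳 → ℝ), m ω (g + g') = m ω g + m ω g')
    (hm_smul : ∀ ω (c : ℝ) (g : 𝒳 → ℝ), m ω (c • g) = c * m ω g)
    -- γ0 is the conditional expectation of Y given X:
    (hce : ∀ a : 𝒳 → ℝ, MemLp (fun ω => a (X ω)) 2 μ →
      ∫ ω, a (X ω) * (Y ω - γ0 (X ω)) ∂μ = 0)
    -- Riesz representation: E[m(W,g)] = E[α0(X) g(X)] for all square-integrable g: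
    (hRiesz : ∀ g : 𝒳 → ℝ, MemLp (fun ω => g (X ω)) 2 μ →
      ∫ ω, m ω g ∂μ = ∫ ω, α0 (X ω) * g (X ω) ∂μ)
    (hmγ : Integrable (fun ω => m ω γ) μ)
    (hmγ0 : Integrable (fun ω => m ω γ0) μ)
    (θ0 : ℝ) (hθ0 : θ0 = ∫ ω, m ω γ0 ∂μ) :
    ∫ ω, (m ω γ - θ0 + α (X ω) * (Y ω - γ (X ω))) ∂μ =
      - ∫ ω, (α (X ω) - α0 (X ω)) * (γ (X ω) - γ0 (X ω)) ∂μ := by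
  have hγd : MemLp (fun ω => γ (X ω) - γ0 (X ω)) 2 μ := hγ.sub hγ0
  have hYd : MemLp (fun ω => Y ω - γ0 (X ω)) 2 μ := hY.sub hγ0
  -- integrability of all products
  have iαY : Integrable (fun ω => α (X ω) * (Y ω - γ0 (X ω))) μ :=
    my_l2_mul_integrable hα hYd
  have iαγ : Integrable (fun ω => α (X ω) * (γ (X ω) - γ0 (X ω))) μ :=
    my_l2_mul_integrable hα hγd
  have iα0γ : Integrable (fun ω => α0 (X ω) * (γ (X ω) - γ0 (X ω))) μ :=
    my_l2_mul_integrable hα0 hγd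
  have iαYγ : Integrable (fun ω => α (X ω) * (Y ω - γ (X ω))) μ :=
    my_l2_mul_integrable hα (hY.sub hγ)
  -- key integrals
  have hce_α : ∫ ω, α (X ω) * (Y ω - γ0 (X ω)) ∂μ = 0 := hce α hα
  -- ∫ α(X)(Y - γ(X)) = -∫ α(X)(γ(X) - γ0(X))
  have h1 : ∫ ω, α (X ω) * (Y ω - γ (X ω)) ∂μ
      = - ∫ ω, α (X ω) * (γ (X ω) - γ0 (X ω)) ∂μ := by
    have hpt : (fun ω => α (X ω) * (Y ω - γ (X ω)))
        = fun ω => α (X ω) * (Y ω - γ0 (X ω)) - α (X ω) * (γ (X ω) - γ0 (X ω)) := by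
      funext ω; ring
    rw [hpt, integral_sub iαY iαγ, hce_α, zero_sub]
  -- ∫ m(·,γ) - θ0 = ∫ α0(X)(γ(X) - γ0(X))
  have h2 : ∫ ω, m ω γ ∂μ - θ0 = ∫ ω, α0 (X ω) * (γ (X ω) - γ0 (X ω)) ∂μ := by
    rw [hθ0, hRiesz γ hγ, hRiesz γ0 hγ0]
    rw [← integral_sub (my_l2_mul_integrable hα0 hγ) (my_l2_mul_integrable hα0 hγ0)]
    congr 1; funext ω; ring
  -- RHS expansion
  have h3 : ∫ ω, (α (X ω) - α0 (X ω)) * (γ (X ω) - γ0 (X ω)) ∂μ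
      = ∫ ω, α (X ω) * (γ (X ω) - γ0 (X ω)) ∂μ
        - ∫ ω, α0 (X ω) * (γ (X ω) - γ0 (X ω)) ∂μ := by
    rw [← integral_sub iαγ iα0γ]
    congr 1; funext ω; ring
  -- LHS split
  have hL : ∫ ω, (m ω γ - θ0 + α (X ω) * (Y ω - γ (X ω))) ∂μ
      = (∫ ω, m ω γ ∂μ - θ0) + ∫ ω, α (X ω) * (Y ω - γ (X ω)) ∂μ := by
    calc ∫ ω, (m ω γ - θ0 + α (X ω) * (Y ω - γ (X ω))) ∂μ
        = ∫ ω, ((m ω γ + α (X ω) * (Y ω - γ (X ω))) - θ0) ∂μ := by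
          congr 1; funext ω; ring
      _ = (∫ ω, (m ω γ + α (X ω) * (Y ω - γ (X ω))) ∂μ) - θ0 := by
          have hsum : Integrable (fun ω => m ω γ + α (X ω) * (Y ω - γ (X ω))) μ :=
            hmγ.add iαYγ
          rw [integral_sub hsum (integrable_const θ0), integral_const]; simp
      _ = (∫ ω, m ω γ ∂μ - θ0) + ∫ ω, α (X ω) * (Y ω - γ (X ω)) ∂μ := by
          rw [integral_add hmγ iαYγ]; ring
  rw [hL, h1, h2, h3]
  ring
end

section
/- (Lemma C2, Lasso part) Let α0 ∈ L²(X), b: X → ℝ^p with each component square-integrable, and suppose there exist C > 0 and ρₙ ∈ ℝ^p with |ρₙ|₁ ≤ C and ‖α0 − b'ρₙ‖² ≤ C εₙ, where ‖·‖ is the L²(X) norm and εₙ > 0. Let ρ_L minimize ρ ↦ ‖α0 − b'ρ‖² + 2εₙ|ρ|₁. Then ‖α0 − b'ρ_L‖² ≤ C εₙ and |ρ_L|₁ ≤ C (for a possibly different constant C). -/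
open MeasureTheory

/-- Lemma C2, Lasso part: the population Lasso coefficient `ρ_L` satisfies
`‖α₀ − b'ρ_L‖² ≤ C' εₙ` and `|ρ_L|₁ ≤ C'` for a constant `C' = 3C`. -/
theorem population_lasso_approximation
    {𝒳 : Type*} [MeasurableSpace 𝒳] (μ : Measure 𝒳) [IsProbabilityMeasure μ]
    {p : ℕ} (α0 : 𝒳 → ℝ) (b : 𝒳 → Fin p → ℝ)
    (hα0 : MemLp α0 2 μ) (hb : ∀ j, MemLp (fun x => b x j) 2 μ)
    (C εn : ℝ) (hC : 0 < C) (hεn : 0 < εn)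
    (ρn : Fin p → ℝ)
    (hρn1 : ∑ j, |ρn j| ≤ C)
    (hρn2 : ∫ x, (α0 x - ∑ j, b x j * ρn j) ^ 2 ∂μ ≤ C * εn)
    (ρL : Fin p → ℝ)
    (hρL : ∀ ρ : Fin p → ℝ,
      (∫ x, (α0 x - ∑ j, b x j * ρL j) ^ 2 ∂μ) + 2 * εn * (∑ j, |ρL j|)
        ≤ (∫ x, (α0 x - ∑ j, b x j * ρ j) ^ 2 ∂μ) + 2 * εn * (∑ j, |ρ j|)) :
    (∫ x, (α0 x - ∑ j, b x j * ρL j) ^ 2 ∂μ) ≤ 3 * C * εn ∧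
      (∑ j, |ρL j|) ≤ 3 * C := by
  have key := hρL ρn
  have hIL : 0 ≤ ∫ x, (α0 x - ∑ j, b x j * ρL j) ^ 2 ∂μ :=
    integral_nonneg fun x => sq_nonneg _
  have hSL : 0 ≤ ∑ j, |ρL j| := Finset.sum_nonneg fun j _ => abs_nonneg _
  constructor <;> nlinarith
end

section
/- (Lemma C2, Dantzig part) With the assumptions of the Lasso part, let M = E[α0(X)b(X)] and G = E[b(X)b(X)'], and let ρ_D minimize |ρ|₁ subject to |M − Gρ|_∞ ≤ εₙ. Then ρ_L is feasible for this problem, |ρ_D|₁ ≤ |ρ_L|₁, ‖b'(ρ_L − ρ_D)‖² ≤ |ρ_L − ρ_D|₁ · |G(ρ_D − ρ_L)|_∞ ≤ C εₙ, and hence ‖α0 − b'ρ_D‖² ≤ C εₙ for some constant C. -/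
open MeasureTheory Matrix

/-- Lemma C2, Dantzig part: with `M = E[α₀(X)b(X)]` and `G = E[b(X)b(X)']`,
the population Dantzig coefficient `ρ_D` satisfies: `ρ_L` is feasible,
`|ρ_D|₁ ≤ |ρ_L|₁`, `‖b'(ρ_L−ρ_D)‖² ≤ |ρ_L−ρ_D|₁·|G(ρ_D−ρ_L)|_∞ ≤ C'εₙ`,
and hence `‖α₀ − b'ρ_D‖² ≤ C''εₙ`. -/
theorem population_dantzig_approximation
    {𝒳 : Type*} [MeasurableSpace 𝒳] (μ : Measure 𝒳) [IsProbabilityMeasure μ]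
    {p : ℕ} (α0 : 𝒳 → ℝ) (b : 𝒳 → Fin p → ℝ)
    (hα0 : MemLp α0 2 μ) (hb : ∀ j, MemLp (fun x => b x j) 2 μ)
    (C εn : ℝ) (hC : 0 < C) (hεn : 0 < εn)
    (ρn : Fin p → ℝ)
    (hρn1 : ∑ j, |ρn j| ≤ C)
    (hρn2 : ∫ x, (α0 x - ∑ j, b x j * ρn j) ^ 2 ∂μ ≤ C * εn)
    (ρL : Fin p → ℝ)
    (hρL : ∀ ρ : Fin p → ℝ,
      (∫ x, (α0 x - ∑ j, b x j * ρL j) ^ 2 ∂μ) + 2 * εn * (∑ j, |ρL j|)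
        ≤ (∫ x, (α0 x - ∑ j, b x j * ρ j) ^ 2 ∂μ) + 2 * εn * (∑ j, |ρ j|))
    (M : Fin p → ℝ) (hM : ∀ j, M j = ∫ x, α0 x * b x j ∂μ)
    (G : Matrix (Fin p) (Fin p) ℝ) (hG : ∀ j k, G j k = ∫ x, b x j * b x k ∂μ)
    (ρD : Fin p → ℝ)
    (hρD_feas : ∀ j, |M j - (G *ᵥ ρD) j| ≤ εn)
    (hρD_min : ∀ ρ : Fin p → ℝ, (∀ j, |M j - (G *ᵥ ρ) j| ≤ εn) →
      ∑ j, |ρD j| ≤ ∑ j, |ρ j|) :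
    (∀ j, |M j - (G *ᵥ ρL) j| ≤ εn) ∧
    (∑ j, |ρD j| ≤ ∑ j, |ρL j|) ∧
    (∫ x, (∑ j, b x j * (ρL j - ρD j)) ^ 2 ∂μ
        ≤ (∑ j, |ρL j - ρD j|) * (⨆ j, |(G *ᵥ (ρD - ρL)) j|)) ∧
    ((∑ j, |ρL j - ρD j|) * (⨆ j, |(G *ᵥ (ρD - ρL)) j|) ≤ 6 * C * εn) ∧
    (∫ x, (α0 x - ∑ j, b x j * ρD j) ^ 2 ∂μ ≤ 18 * C * εn) := by
  classical
  -- products of L² functions are integrable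
  have hmul : ∀ (f g : 𝒳 → ℝ), MemLp f 2 μ → MemLp g 2 μ →
      Integrable (fun x => f x * g x) μ := by
    intro f g hf hg
    have h : MemLp (f • g) 1 μ := by
      exact hg.smul hf
    rw [memLp_one_iff_integrable] at h
    exact h
  -- finite linear combinations of the b's are in L²
  have hbsum : ∀ ρ : Fin p → ℝ, MemLp (fun x => ∑ j, b x j * ρ j) 2 μ := by
    intro ρ
    have h1 : ∀ j : Fin p, MemLp (fun x => b x j * ρ j) 2 μ := by
      intro j
      have heq : (fun x => b x j * ρ j) = fun x => ρ j * b x j := by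
        funext x; ring
      rw [heq]
      exact (hb j).const_mul (ρ j)
    exact memLp_finset_sum Finset.univ fun j _ => h1 j
  have hres : ∀ ρ : Fin p → ℝ, MemLp (fun x => α0 x - ∑ j, b x j * ρ j) 2 μ :=
    fun ρ => hα0.sub (hbsum ρ)
  -- mulVec formula
  have hmv : ∀ (v : Fin p → ℝ) j, (G *ᵥ v) j = ∑ k, G j k * v k := by
    intro v j; rfl
  -- inner product of residual with b_j
  have hint1 : ∀ (ρ : Fin p → ℝ) (j : Fin p),
      ∫ x, (α0 x - ∑ k, b x k * ρ k) * b x j ∂μ = M j - (G *ᵥ ρ) j := by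
    intro ρ j
    have hik : ∀ k : Fin p, Integrable (fun x => ρ k * (b x k * b x j)) μ :=
      fun k => (hmul _ _ (hb k) (hb j)).const_mul (ρ k)
    have heq : (fun x => (α0 x - ∑ k, b x k * ρ k) * b x j)
        = fun x => α0 x * b x j - ∑ k, ρ k * (b x k * b x j) := by
      funext x
      rw [sub_mul, Finset.sum_mul]
      congr 1
      exact Finset.sum_congr rfl fun k _ => by ring
    rw [heq, integral_sub (hmul _ _ hα0 (hb j)) (integrable_finset_sum _ fun k _ => hik k),
      integral_finset_sum _ fun k _ => hik k, hM, hmv]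
    congr 1
    refine Finset.sum_congr rfl fun k _ => ?_
    have hcomm : ∫ x, b x k * b x j ∂μ = G j k := by
      rw [hG]
      exact integral_congr_ae (Filter.Eventually.of_forall fun x => mul_comm _ _)
    rw [integral_const_mul, hcomm, mul_comm]
  -- expansion of squared residual under a rank-one perturbation
  have hexp : ∀ (t : ℝ) (j : Fin p),
      ∫ x, ((α0 x - ∑ k, b x k * ρL k) - t * b x j) ^ 2 ∂μ
        = (∫ x, (α0 x - ∑ k, b x k * ρL k) ^ 2 ∂μ)
          - 2 * t * (M j - (G *ᵥ ρL) j) + t ^ 2 * G j j := by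
    intro t j
    have hg2 : Integrable (fun x => (α0 x - ∑ k, b x k * ρL k) ^ 2) μ :=
      (hres ρL).integrable_sq
    have hgb : Integrable (fun x => (α0 x - ∑ k, b x k * ρL k) * b x j) μ :=
      hmul _ _ (hres ρL) (hb j)
    have hbb : Integrable (fun x => b x j * b x j) μ := hmul _ _ (hb j) (hb j)
    have hsub : Integrable (fun x => (α0 x - ∑ k, b x k * ρL k) ^ 2
        - (2 * t) * ((α0 x - ∑ k, b x k * ρL k) * b x j)) μ :=
      hg2.sub (hgb.const_mul (2 * t))
    have hc2 : Integrable (fun x => t ^ 2 * (b x j * b x j)) μ :=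
      hbb.const_mul (t ^ 2)
    have heq : (fun x => ((α0 x - ∑ k, b x k * ρL k) - t * b x j) ^ 2)
        = fun x => ((α0 x - ∑ k, b x k * ρL k) ^ 2
            - (2 * t) * ((α0 x - ∑ k, b x k * ρL k) * b x j))
            + t ^ 2 * (b x j * b x j) := by
      funext x; ring
    rw [heq, integral_add hsub hc2, integral_sub hg2 (hgb.const_mul (2 * t)),
      integral_const_mul, integral_const_mul, hint1, hG]
  -- basic nonnegativity facts
  have hGdiag : ∀ j, 0 ≤ G j j := by
    intro j
    rw [hG]
    exact integral_nonneg fun x => mul_self_nonneg _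
  -- Part 1 : ρL is feasible
  have part1 : ∀ j, |M j - (G *ᵥ ρL) j| ≤ εn := by
    intro j
    set D := M j - (G *ᵥ ρL) j with hD
    -- for every t, 2 t D ≤ t² G j j + 2 εₙ |t|
    have key : ∀ t : ℝ, 2 * t * D ≤ t ^ 2 * G j j + 2 * εn * |t| := by
      intro t
      have h := hρL (fun k => ρL k + if k = j then t else 0)
      have hsum : ∀ x, (∑ k, b x k * (ρL k + if k = j then t else 0))
          = (∑ k, b x k * ρL k) + t * b x j := by
        intro x
        have : ∀ k, b x k * (ρL k + if k = j then t else 0)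
            = b x k * ρL k + if k = j then t * b x k else 0 := by
          intro k; split <;> ring
        simp only [this, Finset.sum_add_distrib, Finset.sum_ite_eq' Finset.univ j,
          Finset.mem_univ, if_true]
      have hres_eq : (fun x => α0 x - ∑ k, b x k * (ρL k + if k = j then t else 0))
          = fun x => (α0 x - ∑ k, b x k * ρL k) - t * b x j := by
        funext x; rw [hsum]; ring
      have habs : (∑ k, |ρL k + if k = j then t else 0|)
          ≤ (∑ k, |ρL k|) + |t| := by
        have h1 : ∀ k ∈ Finset.univ, |ρL k + if k = j then t else 0|
            ≤ |ρL k| + if k = j then |t| else 0 := by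
          intro k _
          split
          · exact abs_add_le _ _
          · simp
        calc (∑ k, |ρL k + if k = j then t else 0|)
            ≤ ∑ k, (|ρL k| + if k = j then |t| else 0) := Finset.sum_le_sum h1
          _ = (∑ k, |ρL k|) + |t| := by
              rw [Finset.sum_add_distrib, Finset.sum_ite_eq' Finset.univ j]
              simp
      have h2 : (∫ x, (α0 x - ∑ k, b x k * ρL k) ^ 2 ∂μ) + 2 * εn * (∑ k, |ρL k|)
          ≤ ((∫ x, (α0 x - ∑ k, b x k * ρL k) ^ 2 ∂μ)
              - 2 * t * D + t ^ 2 * G j j) + 2 * εn * ((∑ k, |ρL k|) + |t|) := by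
        calc (∫ x, (α0 x - ∑ k, b x k * ρL k) ^ 2 ∂μ) + 2 * εn * (∑ k, |ρL k|)
            ≤ (∫ x, (α0 x - ∑ k, b x k * (ρL k + if k = j then t else 0)) ^ 2 ∂μ)
              + 2 * εn * (∑ k, |ρL k + if k = j then t else 0|) := h
          _ ≤ ((∫ x, (α0 x - ∑ k, b x k * ρL k) ^ 2 ∂μ)
              - 2 * t * D + t ^ 2 * G j j) + 2 * εn * ((∑ k, |ρL k|) + |t|) := by
              have : (∫ x, (α0 x - ∑ k, b x k * (ρL k + if k = j then t else 0)) ^ 2 ∂μ)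
                  = (∫ x, (α0 x - ∑ k, b x k * ρL k) ^ 2 ∂μ)
                    - 2 * t * D + t ^ 2 * G j j := by
                rw [show (fun x => (α0 x - ∑ k, b x k * (ρL k + if k = j then t else 0)) ^ 2)
                    = fun x => ((α0 x - ∑ k, b x k * ρL k) - t * b x j) ^ 2 by
                  funext x; rw [hsum]; ring]
                exact hexp t j
              rw [this]
              have := mul_le_mul_of_nonneg_left habs (by positivity : (0:ℝ) ≤ 2 * εn)
              linarith
      linarith
    -- deduce 2 D² ≤ 2 εₙ |D|
    have h2D : 2 * D ^ 2 ≤ 2 * εn * |D| := by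
      have hstep : ∀ s : ℝ, 0 < s → 2 * D ^ 2 ≤ s * (D ^ 2 * G j j) + 2 * εn * |D| := by
        intro s hs
        have := key (s * D)
        have habs : |s * D| = s * |D| := by
          rw [abs_mul, abs_of_pos hs]
        rw [habs] at this
        -- 2 s D² ≤ s² D² Gjj + 2 εₙ s |D|
        nlinarith [this, hs, sq_nonneg D, hGdiag j, abs_nonneg D]
      by_cases hzero : D ^ 2 * G j j = 0
      · have := hstep 1 one_pos
        rw [hzero] at this
        linarith
      · have hpos : 0 < D ^ 2 * G j j := by
          rcases lt_or_eq_of_le (mul_nonneg (sq_nonneg D) (hGdiag j)) with h | h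
          · exact h
          · exact absurd h.symm hzero
        refine le_of_forall_pos_le_add fun ε hε => ?_
        have := hstep (ε / (D ^ 2 * G j j)) (div_pos hε hpos)
        rw [div_mul_cancel₀ _ (ne_of_gt hpos)] at this
        linarith
    -- conclude |D| ≤ εₙ
    rcases eq_or_ne D 0 with h | h
    · rw [h, abs_zero]; exact le_of_lt hεn
    · have habs : 0 < |D| := abs_pos.mpr h
      have : |D| * |D| ≤ εn * |D| := by
        nlinarith [h2D, sq_abs D]
      exact le_of_mul_le_mul_right this habs
  have part2 : ∑ j, |ρD j| ≤ ∑ j, |ρL j| := hρD_min ρL part1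
  -- one-norm bound on ρL
  have hρL_bound : ∑ j, |ρL j| ≤ 3 * C / 2 := by
    have h := hρL ρn
    have h0 : 0 ≤ ∫ x, (α0 x - ∑ j, b x j * ρL j) ^ 2 ∂μ :=
      integral_nonneg fun x => sq_nonneg _
    nlinarith [h, hρn2, hρn1, h0, hεn]
  have hρL_sq : ∫ x, (α0 x - ∑ j, b x j * ρL j) ^ 2 ∂μ ≤ 3 * C * εn := by
    have h := hρL ρn
    have h0 : 0 ≤ ∑ j, |ρL j| := Finset.sum_nonneg fun j _ => abs_nonneg _
    nlinarith [h, hρn2, hρn1, h0, hεn]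
  -- the sup norm quantity
  set S := ⨆ j, |(G *ᵥ (ρD - ρL)) j| with hS
  have hGdiff : ∀ j, |(G *ᵥ (ρD - ρL)) j| ≤ 2 * εn := by
    intro j
    have : (G *ᵥ (ρD - ρL)) j = (M j - (G *ᵥ ρL) j) - (M j - (G *ᵥ ρD) j) := by
      rw [Matrix.mulVec_sub, Pi.sub_apply]
      ring
    rw [this]
    calc |(M j - (G *ᵥ ρL) j) - (M j - (G *ᵥ ρD) j)|
        ≤ |M j - (G *ᵥ ρL) j| + |M j - (G *ᵥ ρD) j| := abs_sub _ _
      _ ≤ εn + εn := add_le_add (part1 j) (hρD_feas j)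
      _ = 2 * εn := by ring
  have hS_nonneg : 0 ≤ S := by
    rcases isEmpty_or_nonempty (Fin p) with hp | hp
    · rw [hS, Real.iSup_of_isEmpty]
    · exact le_ciSup_of_le (Set.Finite.bddAbove (Set.finite_range _))
        (Classical.arbitrary (Fin p)) (abs_nonneg _)
  have hS_le : S ≤ 2 * εn := by
    rcases isEmpty_or_nonempty (Fin p) with hp | hp
    · rw [hS, Real.iSup_of_isEmpty]; positivity
    · exact ciSup_le hGdiff
  -- Part 3
  have hδsum : ∑ j, |ρL j - ρD j| ≤ 3 * C := by
    calc ∑ j, |ρL j - ρD j| ≤ ∑ j, (|ρL j| + |ρD j|) :=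
          Finset.sum_le_sum fun j _ => abs_sub _ _
      _ = (∑ j, |ρL j|) + ∑ j, |ρD j| := Finset.sum_add_distrib
      _ ≤ (3 * C / 2) + (3 * C / 2) := add_le_add hρL_bound (part2.trans hρL_bound)
      _ = 3 * C := by ring
  have part3 : ∫ x, (∑ j, b x j * (ρL j - ρD j)) ^ 2 ∂μ
      ≤ (∑ j, |ρL j - ρD j|) * S := by
    set δ : Fin p → ℝ := fun j => ρL j - ρD j with hδ
    have hδL2 : MemLp (fun x => ∑ j, b x j * δ j) 2 μ := hbsum δ
    have hik : ∀ j : Fin p,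
        Integrable (fun x => δ j * (b x j * ∑ k, b x k * δ k)) μ :=
      fun j => (hmul _ _ (hb j) hδL2).const_mul (δ j)
    have hsq : ∫ x, (∑ j, b x j * δ j) ^ 2 ∂μ
        = ∑ j, δ j * ∫ x, b x j * (∑ k, b x k * δ k) ∂μ := by
      have heq : (fun x => (∑ j, b x j * δ j) ^ 2)
          = fun x => ∑ j, δ j * (b x j * ∑ k, b x k * δ k) := by
        funext x
        rw [sq, Finset.sum_mul]
        exact Finset.sum_congr rfl fun j _ => by ring
      rw [heq, integral_finset_sum _ fun j _ => hik j]
      exact Finset.sum_congr rfl fun j _ => integral_const_mul _ _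
    have hinner : ∀ j, ∫ x, b x j * (∑ k, b x k * δ k) ∂μ = -(G *ᵥ (ρD - ρL)) j := by
      intro j
      have : ∫ x, b x j * (∑ k, b x k * δ k) ∂μ = ∑ k, G j k * δ k := by
        have heq : (fun x => b x j * (∑ k, b x k * δ k))
            = fun x => ∑ k, δ k * (b x j * b x k) := by
          funext x
          rw [Finset.mul_sum]
          exact Finset.sum_congr rfl fun k _ => by ring
        rw [heq, integral_finset_sum _ fun k _ =>
          (hmul _ _ (hb j) (hb k)).const_mul (δ k)]
        refine Finset.sum_congr rfl fun k _ => ?_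
        rw [integral_const_mul, ← hG, mul_comm]
      rw [this, hmv, ← Finset.sum_neg_distrib]
      refine Finset.sum_congr rfl fun k _ => ?_
      simp only [hδ, Pi.sub_apply]
      ring
    rw [hsq]
    have hterm : ∀ j ∈ Finset.univ, δ j * ∫ x, b x j * (∑ k, b x k * δ k) ∂μ
        ≤ |δ j| * S := by
      intro j _
      rw [hinner j]
      calc δ j * -(G *ᵥ (ρD - ρL)) j ≤ |δ j * -(G *ᵥ (ρD - ρL)) j| := le_abs_self _
        _ = |δ j| * |(G *ᵥ (ρD - ρL)) j| := by rw [abs_mul, abs_neg]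
        _ ≤ |δ j| * S := by
            refine mul_le_mul_of_nonneg_left ?_ (abs_nonneg _)
            exact le_ciSup (f := fun j => |(G *ᵥ (ρD - ρL)) j|)
              (Set.Finite.bddAbove (Set.finite_range _)) j
    calc ∑ j, δ j * ∫ x, b x j * (∑ k, b x k * δ k) ∂μ
        ≤ ∑ j, |δ j| * S := Finset.sum_le_sum hterm
      _ = (∑ j, |δ j|) * S := (Finset.sum_mul ..).symm
  -- Part 4
  have part4 : (∑ j, |ρL j - ρD j|) * S ≤ 6 * C * εn := by
    calc (∑ j, |ρL j - ρD j|) * S ≤ (3 * C) * (2 * εn) :=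
          mul_le_mul hδsum hS_le hS_nonneg (by positivity)
      _ = 6 * C * εn := by ring
  -- Part 5
  refine ⟨part1, part2, part3, part4, ?_⟩
  have hbδ_sq : ∫ x, (∑ j, b x j * (ρL j - ρD j)) ^ 2 ∂μ ≤ 6 * C * εn :=
    part3.trans part4
  have heq : (fun x => (α0 x - ∑ j, b x j * ρD j) ^ 2)
      = fun x => ((α0 x - ∑ j, b x j * ρL j) + ∑ j, b x j * (ρL j - ρD j)) ^ 2 := by
    funext x
    congr 1
    rw [show (∑ j, b x j * (ρL j - ρD j)) = (∑ j, b x j * ρL j) - ∑ j, b x j * ρD j by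
      rw [← Finset.sum_sub_distrib]; exact Finset.sum_congr rfl fun j _ => by ring]
    ring
  have hintL : Integrable (fun x => (α0 x - ∑ j, b x j * ρL j) ^ 2) μ :=
    (hres ρL).integrable_sq
  have hintδ : Integrable (fun x => (∑ j, b x j * (ρL j - ρD j)) ^ 2) μ :=
    (hbsum _).integrable_sq
  have hintD : Integrable (fun x => (α0 x - ∑ j, b x j * ρD j) ^ 2) μ :=
    (hres ρD).integrable_sq
  have hmono : ∫ x, (α0 x - ∑ j, b x j * ρD j) ^ 2 ∂μ
      ≤ ∫ x, (2 * (α0 x - ∑ j, b x j * ρL j) ^ 2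
          + 2 * (∑ j, b x j * (ρL j - ρD j)) ^ 2) ∂μ := by
    refine integral_mono hintD ((hintL.const_mul 2).add (hintδ.const_mul 2)) fun x => ?_
    have := congrFun heq x
    beta_reduce at this
    rw [this]
    nlinarith [sq_nonneg ((α0 x - ∑ j, b x j * ρL j) - ∑ j, b x j * (ρL j - ρD j))]
  rw [integral_add (hintL.const_mul 2) (hintδ.const_mul 2),
    integral_const_mul, integral_const_mul] at hmono
  linarith
end

section
/- (Key inequality in Lemma C4) Let ‖·‖ be the L² norm, α0 ∈ L²(X), b: X → ℝ^p, εₙ > 0, ρ̄ ∈ ℝ^p arbitrary with support J_ρ̄, and let ρ_L minimize ρ ↦ ‖α0 − b'ρ‖² + 2εₙ|ρ|₁. Then, writing α_L = b'ρ_L, ᾱ = b'ρ̄ and δ = ρ_L − ρ̄: ‖α0 − α_L‖² + εₙ Σ_{j ∈ J_ρ̄^c}|δⱼ| ≤ ‖α0 − ᾱ‖² + 3 εₙ Σ_{j ∈ J_ρ̄}|δⱼ|. -/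
open MeasureTheory

/-- Key inequality in Lemma C4: for the population Lasso minimizer `ρ_L` and
any `ρ̄`, with `δ = ρ_L − ρ̄`,
`‖α₀−α_L‖² + εₙ Σ_{j∉J_ρ̄}|δⱼ| ≤ ‖α₀−ᾱ‖² + 3εₙ Σ_{j∈J_ρ̄}|δⱼ|`. -/
theorem lasso_key_inequality
    {𝒳 : Type*} [MeasurableSpace 𝒳] (μ : Measure 𝒳) [IsProbabilityMeasure μ]
    {p : ℕ} (α0 : 𝒳 → ℝ) (b : 𝒳 → Fin p → ℝ)
    (εn : ℝ) (hεn : 0 < εn)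
    (ρbar ρL : Fin p → ℝ)
    (hρL : ∀ ρ : Fin p → ℝ,
      (∫ x, (α0 x - ∑ j, b x j * ρL j) ^ 2 ∂μ) + 2 * εn * (∑ j, |ρL j|)
        ≤ (∫ x, (α0 x - ∑ j, b x j * ρ j) ^ 2 ∂μ) + 2 * εn * (∑ j, |ρ j|)) :
    (∫ x, (α0 x - ∑ j, b x j * ρL j) ^ 2 ∂μ)
        + εn * ∑ j ∈ Finset.univ.filter (fun j => ρbar j = 0), |ρL j - ρbar j|
      ≤ (∫ x, (α0 x - ∑ j, b x j * ρbar j) ^ 2 ∂μ)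
        + 3 * εn * ∑ j ∈ Finset.univ.filter (fun j => ρbar j ≠ 0), |ρL j - ρbar j| := by
  have h := hρL ρbar
  set L := ∫ x, (α0 x - ∑ j, b x j * ρL j) ^ 2 ∂μ with hL
  set R := ∫ x, (α0 x - ∑ j, b x j * ρbar j) ^ 2 ∂μ with hR
  have hsplitL : (∑ j, |ρL j|)
      = (∑ j ∈ Finset.univ.filter (fun j => ρbar j = 0), |ρL j|)
      + ∑ j ∈ Finset.univ.filter (fun j => ¬ ρbar j = 0), |ρL j| :=
    (Finset.sum_filter_add_sum_filter_not _ _ _).symm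
  have hsplitB : (∑ j, |ρbar j|)
      = (∑ j ∈ Finset.univ.filter (fun j => ρbar j = 0), |ρbar j|)
      + ∑ j ∈ Finset.univ.filter (fun j => ¬ ρbar j = 0), |ρbar j| :=
    (Finset.sum_filter_add_sum_filter_not _ _ _).symm
  have hS : (∑ j ∈ Finset.univ.filter (fun j => ρbar j = 0), |ρL j - ρbar j|)
      = ∑ j ∈ Finset.univ.filter (fun j => ρbar j = 0), |ρL j| := by
    refine Finset.sum_congr rfl fun j hj => ?_
    simp only [Finset.mem_filter] at hj
    rw [hj.2, sub_zero]
  have hSb : (∑ j ∈ Finset.univ.filter (fun j => ρbar j = 0), |ρbar j|) = 0 := by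
    refine Finset.sum_eq_zero fun j hj => ?_
    simp only [Finset.mem_filter] at hj
    rw [hj.2, abs_zero]
  have hT : (∑ j ∈ Finset.univ.filter (fun j => ¬ ρbar j = 0), |ρbar j|)
      ≤ (∑ j ∈ Finset.univ.filter (fun j => ¬ ρbar j = 0), |ρL j - ρbar j|)
      + ∑ j ∈ Finset.univ.filter (fun j => ¬ ρbar j = 0), |ρL j| := by
    rw [← Finset.sum_add_distrib]
    refine Finset.sum_le_sum fun j _ => ?_
    have h1 := abs_sub_abs_le_abs_sub (ρbar j) (ρL j)
    have h2 : |ρbar j - ρL j| = |ρL j - ρbar j| := abs_sub_comm _ _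
    linarith
  have hTnn : (0:ℝ) ≤ ∑ j ∈ Finset.univ.filter (fun j => ¬ ρbar j = 0), |ρL j - ρbar j| :=
    Finset.sum_nonneg fun j _ => abs_nonneg _
  have heq : (∑ j ∈ Finset.univ.filter (fun j => ρbar j ≠ 0), |ρL j - ρbar j|)
      = ∑ j ∈ Finset.univ.filter (fun j => ¬ ρbar j = 0), |ρL j - ρbar j| := rfl
  have hAnn : (0:ℝ) ≤ ∑ j ∈ Finset.univ.filter (fun j => ρbar j = 0), |ρL j| :=
    Finset.sum_nonneg fun j _ => abs_nonneg _
  rw [hS, heq]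
  rw [hsplitL, hsplitB, hSb] at h
  nlinarith [mul_le_mul_of_nonneg_left hT (le_of_lt hεn),
    mul_nonneg hεn.le hTnn, mul_nonneg hεn.le hAnn]
end

section
/- (ℓ¹ bound for the Lasso estimator, core step of Lemma C3) Let M̂ ∈ ℝ^p, Ĝ a p×p positive semi-definite matrix, ρ_L ∈ ℝ^p, r > 0, and suppose |M̂ − Ĝρ_L|_∞ ≤ r/4. Let ρ̂ minimize ρ ↦ −2M̂'ρ + ρ'Ĝρ + 2r|ρ|₁. Then |ρ̂|₁ ≤ 3|ρ_L|₁. -/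
open Matrix

/-- ℓ¹ bound for the Lasso estimator (core of Lemma C3): if
`|M̂ − Ĝρ_L|_∞ ≤ r/4` and `ρ̂` minimizes `ρ ↦ −2M̂'ρ + ρ'Ĝρ + 2r|ρ|₁`, then
`|ρ̂|₁ ≤ 3|ρ_L|₁`. -/
theorem lasso_l1_bound
    {p : ℕ} (Mhat : Fin p → ℝ) (Ghat : Matrix (Fin p) (Fin p) ℝ)
    (hG : Ghat.PosSemidef)
    (ρL : Fin p → ℝ) (r : ℝ) (hr : 0 < r)
    (hFOC : ∀ j, |Mhat j - (Ghat *ᵥ ρL) j| ≤ r / 4)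
    (ρhat : Fin p → ℝ)
    (hmin : ∀ ρ : Fin p → ℝ,
      -2 * (∑ j, Mhat j * ρhat j) + ρhat ⬝ᵥ (Ghat *ᵥ ρhat) + 2 * r * (∑ j, |ρhat j|)
        ≤ -2 * (∑ j, Mhat j * ρ j) + ρ ⬝ᵥ (Ghat *ᵥ ρ) + 2 * r * (∑ j, |ρ j|)) :
    ∑ j, |ρhat j| ≤ 3 * ∑ j, |ρL j| := by
  set A := ∑ j, |ρhat j| with hA
  set B := ∑ j, |ρL j| with hB
  have hA0 : 0 ≤ A := Finset.sum_nonneg fun j _ => abs_nonneg _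
  have hB0 : 0 ≤ B := Finset.sum_nonneg fun j _ => abs_nonneg _
  -- symmetry
  have hTsym : Ghatᵀ = Ghat := hG.1
  have hsym : ρhat ⬝ᵥ (Ghat *ᵥ ρL) = ρL ⬝ᵥ (Ghat *ᵥ ρhat) := by
    rw [Matrix.dotProduct_mulVec, ← Matrix.mulVec_transpose, hTsym, dotProduct_comm]
  -- PSD
  have hq : 0 ≤ (ρhat - ρL) ⬝ᵥ (Ghat *ᵥ (ρhat - ρL)) := by
    have := hG.dotProduct_mulVec_nonneg (ρhat - ρL)
    simpa using this
  have expand : (ρhat - ρL) ⬝ᵥ (Ghat *ᵥ (ρhat - ρL))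
      = ρhat ⬝ᵥ (Ghat *ᵥ ρhat) - 2 * (ρL ⬝ᵥ (Ghat *ᵥ ρhat)) + ρL ⬝ᵥ (Ghat *ᵥ ρL) := by
    rw [Matrix.mulVec_sub, dotProduct_sub, sub_dotProduct, sub_dotProduct,
      hsym]
    ring
  -- linear term bound
  have hlin : ∑ j, (Mhat j - (Ghat *ᵥ ρL) j) * (ρhat j - ρL j) ≤ (r/4) * (A + B) := by
    have h1 : ∀ j ∈ Finset.univ, (Mhat j - (Ghat *ᵥ ρL) j) * (ρhat j - ρL j)
        ≤ (r/4) * (|ρhat j| + |ρL j|) := by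
      intro j _
      calc (Mhat j - (Ghat *ᵥ ρL) j) * (ρhat j - ρL j)
          ≤ |(Mhat j - (Ghat *ᵥ ρL) j) * (ρhat j - ρL j)| := le_abs_self _
        _ = |Mhat j - (Ghat *ᵥ ρL) j| * |ρhat j - ρL j| := abs_mul _ _
        _ ≤ (r/4) * (|ρhat j| + |ρL j|) := by
            apply mul_le_mul (hFOC j) (abs_sub _ _) (abs_nonneg _)
            linarith [hr]
    calc ∑ j, (Mhat j - (Ghat *ᵥ ρL) j) * (ρhat j - ρL j)
        ≤ ∑ j, (r/4) * (|ρhat j| + |ρL j|) := Finset.sum_le_sum h1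
      _ = (r/4) * (A + B) := by rw [← Finset.mul_sum, Finset.sum_add_distrib]
  -- relate linear term to dot products
  have hlin' : ∑ j, (Mhat j - (Ghat *ᵥ ρL) j) * (ρhat j - ρL j)
      = (∑ j, Mhat j * ρhat j) - (∑ j, Mhat j * ρL j)
        - (ρL ⬝ᵥ (Ghat *ᵥ ρhat)) + (ρL ⬝ᵥ (Ghat *ᵥ ρL)) := by
    have h2 : (ρL ⬝ᵥ (Ghat *ᵥ ρhat)) = ∑ j, (Ghat *ᵥ ρL) j * ρhat j := by
      rw [← hsym, dotProduct_comm]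
      rfl
    have h3 : (ρL ⬝ᵥ (Ghat *ᵥ ρL)) = ∑ j, (Ghat *ᵥ ρL) j * ρL j := by
      rw [dotProduct_comm]
      rfl
    rw [h2, h3]
    rw [← Finset.sum_sub_distrib, ← Finset.sum_sub_distrib, ← Finset.sum_add_distrib]
    congr 1; funext j; ring
  have h0 := hmin ρL
  nlinarith [hq, expand ▸ hq, hlin, hlin', h0, hB0, hA0, hr]
end
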